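/- arXiv:1311.2147 — 2 statements merged into one kernel-verified Lean document; each statement's English description precedes it below -/
import Mathlib

section
/- After an incremental update on the set E_i(v) of edges incoming to v, for any s, b ∈ V and any edge (a,b): if (a,b) lies on a shortest path from s to b in G'_R that is not a shortest path in G_R, then the reversed edge (b,a) lies on a shortest path from b to v in G', i.e., (b,a) ∈ DAG'(b) and w'(b,a) + d'(a,v) = d'(b,v), so that (a,b) ∈ R_b. -/
open scoped ENNReal

namespace BC

variable {V : Type*}

/-- `p` is a path from `s` to `t` in the weighted digraph with weight function `w`;
an edge is present iff its weight is not `⊤`. -/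
def IsPath (w : V → V → ℝ≥0∞) (s t : V) (p : List V) : Prop :=
  p ≠ [] ∧ p.head? = some s ∧ p.getLast? = some t ∧ p.Chain' (fun a b => w a b ≠ ⊤)

/-- The weight of a path: the sum of the weights of its consecutive edges. -/
noncomputable def pWeight (w : V → V → ℝ≥0∞) (p : List V) : ℝ≥0∞ :=
  ((p.zip p.tail).map fun e => w e.1 e.2).sum

/-- The shortest-path distance `d(s,t)` (equal to `⊤` if no path exists). -/
noncomputable def dist (w : V → V → ℝ≥0∞) (s t : V) : ℝ≥0∞ :=
  ⨅ p ∈ {p | IsPath w s t p}, pWeight w p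

/-- `p` is a shortest path from `s` to `t`. -/
def IsShortest (w : V → V → ℝ≥0∞) (s t : V) (p : List V) : Prop :=
  IsPath w s t p ∧ pWeight w p = dist w s t

/-- `σ_{st}`: the number of shortest paths from `s` to `t`. -/
noncomputable def nsp (w : V → V → ℝ≥0∞) (s t : V) : ℕ :=
  Set.ncard {p | IsShortest w s t p}

/-- `σ_{st}(x)`: the number of shortest paths from `s` to `t` passing through `x`. -/
noncomputable def nspVia (w : V → V → ℝ≥0∞) (s t x : V) : ℕ :=
  Set.ncard {p | IsShortest w s t p ∧ x ∈ p}

/-- The directed edge `(a,b)` lies on the path `p`. -/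
def edgeOn (p : List V) (a b : V) : Prop := (a, b) ∈ p.zip p.tail

/-- The shortest-path DAG rooted at `s`: the edges lying on shortest paths from `s`. -/
def dagSet (w : V → V → ℝ≥0∞) (s : V) : Set (V × V) :=
  {e | w e.1 e.2 ≠ ⊤ ∧ dist w s e.1 ≠ ⊤ ∧ dist w s e.1 + w e.1 e.2 = dist w s e.2}

section Aux

variable {W : V → V → ℝ≥0∞} {s t x a b : V} {p l r : List V}

lemma pWeight_nil (W : V → V → ℝ≥0∞) : pWeight W ([] : List V) = 0 := rfl

lemma pWeight_single (W : V → V → ℝ≥0∞) (x : V) : pWeight W [x] = 0 := rfl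

lemma pWeight_cons₂ (W : V → V → ℝ≥0∞) (a b : V) (l : List V) :
    pWeight W (a :: b :: l) = W a b + pWeight W (b :: l) := by
  simp [pWeight]

lemma pairs_decomp (h : (a, b) ∈ p.zip p.tail) : ∃ l r, p = l ++ a :: b :: r := by
  induction p with
  | nil => simp at h
  | cons x q ih =>
    cases q with
    | nil => simp at h
    | cons y q' =>
      rcases (by simpa using h : (a, b) = (x, y) ∨ (a, b) ∈ (y :: q').zip q') with h1 | h2
      · rw [Prod.mk.injEq] at h1
        obtain ⟨rfl, rfl⟩ := h1
        exact ⟨[], q', rfl⟩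
      · obtain ⟨l, r, hlr⟩ := ih (by simpa using h2)
        exact ⟨x :: l, r, by rw [List.cons_append, ← hlr]⟩

lemma chain'_pairs {R : V → V → Prop} :
    p.Chain' R ↔ ∀ a b, (a, b) ∈ p.zip p.tail → R a b := by
  induction p with
  | nil => simp [List.Chain']
  | cons x q ih =>
    cases q with
    | nil => simp [List.Chain']
    | cons y q' =>
      unfold List.Chain' at ih ⊢
      rw [List.isChain_cons_cons, ih]
      constructor
      · rintro ⟨hxy, hrest⟩ a b hab
        rcases (by simpa using hab : (a, b) = (x, y) ∨ (a, b) ∈ (y :: q').zip q') with h1 | h2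
        · rw [Prod.mk.injEq] at h1
          obtain ⟨rfl, rfl⟩ := h1
          exact hxy
        · exact hrest a b (by simpa using h2)
      · intro h
        refine ⟨h x y (by simp), fun a b hab => h a b ?_⟩
        simp only [List.zip_cons_cons, List.tail_cons, List.mem_cons]
        right
        simpa using hab

lemma pWeight_append (W : V → V → ℝ≥0∞) (l : List V) (x : V) (r : List V) :
    pWeight W (l ++ x :: r) = pWeight W (l ++ [x]) + pWeight W (x :: r) := by
  induction l with
  | nil => simp [pWeight_single]
  | cons c l ih =>
    cases l with
    | nil => simp [pWeight_cons₂, pWeight_single]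
    | cons d l' =>
      simp only [List.cons_append, pWeight_cons₂] at *
      rw [ih, add_assoc]

lemma sum_ne_top {l : List ℝ≥0∞} (h : ∀ y ∈ l, y ≠ ⊤) : l.sum ≠ ⊤ := by
  induction l with
  | nil => simp
  | cons c l ih =>
    rw [List.sum_cons]
    exact ENNReal.add_ne_top.mpr ⟨h c (by simp), ih fun y hy => h y (by simp [hy])⟩

lemma pWeight_ne_top (h : p.Chain' fun a b => W a b ≠ ⊤) : pWeight W p ≠ ⊤ := by
  apply sum_ne_top
  intro y hy
  obtain ⟨e, he, rfl⟩ := List.mem_map.mp hy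
  exact chain'_pairs.mp h e.1 e.2 (by simpa using he)

lemma dist_le (h : IsPath W s t p) : dist W s t ≤ pWeight W p := iInf₂_le p h

lemma exists_path_lt {c : ℝ≥0∞} (h : dist W s t < c) :
    ∃ p, IsPath W s t p ∧ pWeight W p < c := by
  simp only [dist, iInf_lt_iff] at h
  obtain ⟨p, hp, hlt⟩ := h
  exact ⟨p, hp, hlt⟩

lemma dist_self (W : V → V → ℝ≥0∞) (x : V) : dist W x x = 0 := by
  refine le_antisymm ?_ zero_le
  have h : IsPath W x x [x] := ⟨by simp, rfl, rfl, by simp [List.Chain']⟩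
  simpa [pWeight_single] using dist_le h

lemma head?_append_cons (l : List V) (x : V) (r₁ r₂ : List V) :
    (l ++ x :: r₁).head? = (l ++ x :: r₂).head? := by cases l <;> rfl

lemma suffix_shortest (h : IsShortest W s t (l ++ x :: r)) : IsShortest W x t (x :: r) := by
  obtain ⟨⟨hne, hhd, hlast, hch⟩, hw⟩ := h
  have hch2 := List.isChain_split.mp hch
  have hlast2 : (x :: r).getLast? = some t := by
    rw [← hlast, List.getLast?_append_cons]
  have hpath : IsPath W x t (x :: r) := ⟨by simp, rfl, hlast2, hch2.2⟩
  refine ⟨hpath, le_antisymm ?_ (dist_le hpath)⟩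
  by_contra hlt
  push_neg at hlt
  obtain ⟨q, ⟨hqne, hqhd, hqlast, hqch⟩, hqlt⟩ := exists_path_lt hlt
  obtain ⟨q', rfl⟩ : ∃ q', q = x :: q' := by
    cases q with
    | nil => exact absurd rfl hqne
    | cons c q' => exact ⟨q', by rw [Option.some_inj.mp hqhd]⟩
  have hpath' : IsPath W s t (l ++ x :: q') := by
    refine ⟨by simp, ?_, ?_, List.isChain_split.mpr ⟨hch2.1, hqch⟩⟩
    · rw [head?_append_cons l x q' r]; exact hhd
    · rw [List.getLast?_append_cons]; exact hqlast
  have hfin : pWeight W (l ++ [x]) ≠ ⊤ := pWeight_ne_top hch2.1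
  have : dist W s t < dist W s t := by
    calc dist W s t ≤ pWeight W (l ++ x :: q') := dist_le hpath'
      _ = pWeight W (l ++ [x]) + pWeight W (x :: q') := pWeight_append W l x q'
      _ < pWeight W (l ++ [x]) + pWeight W (x :: r) := ENNReal.add_lt_add_left hfin hqlt
      _ = pWeight W (l ++ x :: r) := (pWeight_append W l x r).symm
      _ = dist W s t := hw
  exact lt_irrefl _ this

lemma prefix_shortest (h : IsShortest W s t (l ++ x :: r)) : IsShortest W s x (l ++ [x]) := by
  obtain ⟨⟨hne, hhd, hlast, hch⟩, hw⟩ := h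
  have hch2 := List.isChain_split.mp hch
  have hpath : IsPath W s x (l ++ [x]) := by
    refine ⟨by simp, ?_, ?_, hch2.1⟩
    · rw [head?_append_cons l x [] r]; exact hhd
    · rw [List.getLast?_append_cons]; rfl
  refine ⟨hpath, le_antisymm ?_ (dist_le hpath)⟩
  by_contra hlt
  push_neg at hlt
  obtain ⟨q, ⟨hqne, hqhd, hqlast, hqch⟩, hqlt⟩ := exists_path_lt hlt
  have hqd : q.dropLast ++ [x] = q := List.dropLast_append_getLast? x hqlast
  have hpath' : IsPath W s t (q.dropLast ++ x :: r) := by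
    refine ⟨by simp, ?_, ?_, List.isChain_split.mpr ⟨by rw [hqd]; exact hqch, hch2.2⟩⟩
    · rw [head?_append_cons q.dropLast x r [], hqd]; exact hqhd
    · rw [List.getLast?_append_cons, ← List.getLast?_append_cons l]; exact hlast
  have hfin : pWeight W (x :: r) ≠ ⊤ := pWeight_ne_top hch2.2
  have : dist W s t < dist W s t := by
    calc dist W s t ≤ pWeight W (q.dropLast ++ x :: r) := dist_le hpath'
      _ = pWeight W (q.dropLast ++ [x]) + pWeight W (x :: r) := pWeight_append W _ x r
      _ = pWeight W q + pWeight W (x :: r) := by rw [hqd]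
      _ < pWeight W (l ++ [x]) + pWeight W (x :: r) := ENNReal.add_lt_add_right hfin hqlt
      _ = pWeight W (l ++ x :: r) := (pWeight_append W l x r).symm
      _ = dist W s t := hw
  exact lt_irrefl _ this

lemma dist_mono {W W' : V → V → ℝ≥0∞} (hle : ∀ a b, W' a b ≤ W a b) (s t : V) :
    dist W' s t ≤ dist W s t := by
  refine le_iInf₂ fun p hp => ?_
  obtain ⟨hne, hhd, hlast, hch⟩ := hp
  have hp' : IsPath W' s t p :=
    ⟨hne, hhd, hlast, hch.imp fun {c d} h => ne_top_of_le_ne_top h (hle c d)⟩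
  calc dist W' s t ≤ pWeight W' p := dist_le hp'
    _ ≤ pWeight W p := List.sum_le_sum fun e _ => hle e.1 e.2

lemma pWeight_reverse (W : V → V → ℝ≥0∞) (p : List V) :
    pWeight (fun x y => W y x) p.reverse = pWeight W p := by
  induction p with
  | nil => rfl
  | cons x q ih =>
    cases q with
    | nil => rfl
    | cons y q' =>
      have h1 : (x :: y :: q').reverse = q'.reverse ++ y :: [x] := by simp
      have h2 : q'.reverse ++ [y] = (y :: q').reverse := by simp
      rw [h1, pWeight_append _ q'.reverse y [x], h2, ih, pWeight_cons₂, pWeight_cons₂,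
        pWeight_single, add_zero, add_comm]

lemma isPath_reverse {W : V → V → ℝ≥0∞} {s t : V} {p : List V} (h : IsPath W s t p) :
    IsPath (fun x y => W y x) t s p.reverse := by
  obtain ⟨hne, hhd, hlast, hch⟩ := h
  refine ⟨by simpa using hne, ?_, ?_, ?_⟩
  · rw [List.head?_reverse]; exact hlast
  · rw [List.getLast?_reverse]; exact hhd
  · exact List.isChain_reverse.mpr hch

lemma dist_reverse (W : V → V → ℝ≥0∞) (s t : V) :
    dist (fun x y => W y x) s t = dist W t s := by
  have key : ∀ (W : V → V → ℝ≥0∞) (s t : V), dist (fun x y => W y x) s t ≤ dist W t s := by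
    intro W s t
    refine le_iInf₂ fun p hp => ?_
    calc dist (fun x y => W y x) s t ≤ pWeight (fun x y => W y x) p.reverse :=
          dist_le (isPath_reverse hp)
      _ = pWeight W p := pWeight_reverse W p
  exact le_antisymm (key W s t) (key (fun x y => W y x) t s)

end Aux

/-- after an incremental update on the edges `E_i(v)` incoming to `v`,
if `(a,b)` lies on a shortest path from `s` to `b` in the reverse graph `G'_R` that is
not a shortest path in `G_R`, then the reversed edge `(b,a)` lies on a shortest path
from `b` to `v` in `G'`: `(b,a) ∈ DAG'(b)` and `w'(b,a) + d'(a,v) = d'(b,v)`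
(so that `(a,b) ∈ R_b`). -/
theorem new_reverse_edge_in_Rb [Fintype V]
(w w' : V → V → ℝ≥0∞) (v : V) (U : Finset V)
    (hpos : ∀ a b, 0 < w a b) (hpos' : ∀ a b, 0 < w' a b)
    (hdec : ∀ u ∈ U, w' u v < w u v)
    (hsame : ∀ a b : V, ¬(b = v ∧ a ∈ U) → w' a b = w a b)
    (s b a : V) (p : List V)
    (hp : IsShortest (fun x y => w' y x) s b p)
    (hnot : ¬ IsShortest (fun x y => w y x) s b p)
    (he : edgeOn p a b) :
    (b, a) ∈ dagSet w' b ∧ w' b a + dist w' a v = dist w' b v := by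
  obtain ⟨l, r, rfl⟩ := pairs_decomp he
  -- the pair (a,b) must be at the very end of p
  have hr : r = [] := by
    cases r with
    | nil => rfl
    | cons c r' =>
      exfalso
      have hsplit : l ++ a :: b :: c :: r' = (l ++ [a]) ++ b :: (c :: r') := by simp
      rw [hsplit] at hp
      have hpre := prefix_shortest hp
      have hT1 := pWeight_append (fun x y => w' y x) (l ++ [a]) b (c :: r')
      have hne : dist (fun x y => w' y x) s b ≠ ⊤ := by
        rw [← hpre.2]; exact pWeight_ne_top hpre.1.2.2.2
      have hpos2 : pWeight (fun x y => w' y x) (b :: c :: r') ≠ 0 := by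
        rw [pWeight_cons₂]
        exact (lt_of_lt_of_le (hpos' c b) le_self_add).ne'
      have heq : dist (fun x y => w' y x) s b
          = dist (fun x y => w' y x) s b + pWeight (fun x y => w' y x) (b :: c :: r') := by
        conv_lhs => rw [← hp.2]
        rw [hT1, hpre.2]
      have hlt := ENNReal.lt_add_right hne hpos2
      rw [← heq] at hlt
      exact lt_irrefl _ hlt
  subst hr
  -- the single edge (b,a) of G' is a shortest path from b to a
  have hten : w' b a ≠ ⊤ := chain'_pairs.mp hp.1.2.2.2 a b he
  have hab : IsShortest (fun x y => w' y x) a b [a, b] := suffix_shortest hp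
  have hdab : dist (fun x y => w' y x) a b = w' b a := by
    rw [← hab.2, pWeight_cons₂, pWeight_single, add_zero]
  -- p must use a changed edge
  have hchg : ∃ l' u r', l ++ a :: b :: ([] : List V) = l' ++ v :: u :: r' ∧ u ∈ U := by
    by_contra hno
    push_neg at hno
    apply hnot
    have hpair : ∀ x y, (x, y) ∈ (l ++ a :: b :: []).zip (l ++ a :: b :: []).tail →
        w' y x = w y x := by
      intro x y hxy
      obtain ⟨l', r', hd⟩ := pairs_decomp hxy
      apply hsame
      rintro ⟨rfl, hyU⟩
      exact hno l' y r' hd hyU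
    have hpw : pWeight (fun x y => w y x) (l ++ a :: b :: [])
        = pWeight (fun x y => w' y x) (l ++ a :: b :: []) := by
      unfold pWeight
      congr 1
      refine List.map_congr_left fun e he' => ?_
      obtain ⟨x, y⟩ := e
      exact (hpair x y he').symm
    have hchW : List.Chain' (fun x y => w y x ≠ ⊤) (l ++ a :: b :: []) := by
      rw [chain'_pairs]
      intro x y hxy
      rw [← hpair x y hxy]
      exact chain'_pairs.mp hp.1.2.2.2 x y hxy
    have hpathW : IsPath (fun x y => w y x) s b (l ++ a :: b :: []) :=
      ⟨hp.1.1, hp.1.2.1, hp.1.2.2.1, hchW⟩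
    have hmono : dist (fun x y => w' y x) s b ≤ dist (fun x y => w y x) s b := by
      refine dist_mono (fun x y => ?_) s b
      by_cases hc : x = v ∧ y ∈ U
      · obtain ⟨rfl, hyU⟩ := hc
        exact (hdec y hyU).le
      · exact (hsame y x hc).le
    refine ⟨hpathW, le_antisymm ?_ (dist_le hpathW)⟩
    calc pWeight (fun x y => w y x) (l ++ a :: b :: [])
        = dist (fun x y => w' y x) s b := by rw [hpw, hp.2]
      _ ≤ dist (fun x y => w y x) s b := hmono
  obtain ⟨l', u, r', hdecomp, hU⟩ := hchg
  -- the suffix from v is a shortest path from v to b ending with the edge (a,b)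
  have hp2 := hp
  rw [hdecomp] at hp2
  have hs1 : IsShortest (fun x y => w' y x) v b (v :: u :: r') := suffix_shortest hp2
  set q : List V := v :: u :: r' with hqdef
  have hql : q.getLast? = some b := hs1.1.2.2.1
  have hdl : l ++ [a] = l' ++ q.dropLast := by
    have := congrArg List.dropLast hdecomp
    simpa [List.dropLast_append_of_ne_nil] using this
  have hdlne : q.dropLast ≠ [] := by simp [hqdef]
  have hdla : q.dropLast.getLast? = some a := by
    have h1 : (l' ++ q.dropLast).getLast? = q.dropLast.getLast? :=
      List.getLast?_append_of_ne_nil l' hdlne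
    have h2 : (l ++ [a]).getLast? = some a := by
      rw [List.getLast?_append_cons]; rfl
    rw [← h1, ← hdl]
    exact h2
  have hq1 : q.dropLast.dropLast ++ [a] = q.dropLast :=
    List.dropLast_append_getLast? a hdla
  have hq2 : q.dropLast ++ [b] = q := List.dropLast_append_getLast? b hql
  have hqe : q = q.dropLast.dropLast ++ a :: [b] := by
    rw [← hq2, ← hq1]
    simp
  rw [hqe] at hs1
  have hpre2 := prefix_shortest hs1
  -- combine
  have hkey : dist (fun x y => w' y x) v b = w' b a + dist (fun x y => w' y x) v a := by
    rw [← hs1.2, pWeight_append _ _ a [b], hpre2.2, pWeight_cons₂, pWeight_single, add_zero,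
      add_comm]
  have hrb : dist w' b v = dist (fun x y => w' y x) v b := (dist_reverse w' v b).symm
  have hra : dist w' a v = dist (fun x y => w' y x) v a := (dist_reverse w' v a).symm
  have hba : dist w' b a = w' b a := by
    rw [← dist_reverse w' a b]
    exact hdab
  refine ⟨⟨hten, ?_, ?_⟩, ?_⟩
  · show dist w' b b ≠ ⊤
    rw [dist_self]
    exact ENNReal.zero_ne_top
  · show dist w' b b + w' b a = dist w' b a
    rw [dist_self, zero_add, hba]
  · rw [hra, hrb, hkey]

end BC
end

section
/- After an incremental edge update on (u,v) with new weight w'(u,v), for every pair of vertices s, t the number of shortest paths from s to t in G' that contain the edge (u,v) equals σ_{su} · σ_{vt} if d'(s,t) = d(s,u) + w'(u,v) + d(v,t), and equals 0 if d'(s,t) < d(s,u) + w'(u,v) + d(v,t). -/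
open scoped ENNReal

namespace BC

variable {V : Type*}

lemma chain'_iff_zip {R : V → V → Prop} : ∀ {l : List V},
    l.Chain' R ↔ ∀ x ∈ l.zip l.tail, R x.1 x.2
  | [] => by simp [List.Chain']
  | [a] => by simp [List.Chain']
  | a :: b :: l => by
      simp only [List.Chain']
      rw [List.isChain_cons_cons]
      simp only [List.tail_cons, List.zip_cons_cons, List.mem_cons]
      constructor
      · rintro ⟨hab, h⟩ x hx
        rcases hx with rfl | hx
        · exact hab
        · exact chain'_iff_zip.1 h x hx
      · intro h
        exact ⟨h (a, b) (Or.inl rfl), chain'_iff_zip.2 fun x hx => h x (Or.inr hx)⟩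

lemma zip_tail_append : ∀ {l₁ : List V} {l₂ : List V} {u v : V},
    l₁.getLast? = some u → l₂.head? = some v →
    (l₁ ++ l₂).zip (l₁ ++ l₂).tail = l₁.zip l₁.tail ++ (u, v) :: l₂.zip l₂.tail
  | [], _, _, _, h₁, _ => by simp at h₁
  | [a], l₂, u, v, h₁, h₂ => by
      cases l₂ with
      | nil => simp at h₂
      | cons c l₂' =>
        simp only [List.getLast?_singleton, Option.some.injEq] at h₁
        simp only [List.head?_cons, Option.some.injEq] at h₂
        subst h₁; subst h₂
        simp
  | a :: b :: l₁', l₂, u, v, h₁, h₂ => by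
      rw [List.getLast?_cons_cons] at h₁
      have IH := zip_tail_append (l₂ := l₂) h₁ h₂
      simp only [List.cons_append, List.tail_cons, List.zip_cons_cons]
      exact congrArg (List.cons (a, b)) IH

lemma pWeight_append_s19 {w : V → V → ℝ≥0∞} {l₁ l₂ : List V} {u v : V}
    (h₁ : l₁.getLast? = some u) (h₂ : l₂.head? = some v) :
    pWeight w (l₁ ++ l₂) = pWeight w l₁ + w u v + pWeight w l₂ := by
  unfold pWeight
  rw [zip_tail_append h₁ h₂, List.map_append, List.map_cons, List.sum_append, List.sum_cons,
    ← add_assoc]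

lemma fst_mem_dropLast_of_mem_zip : ∀ {l : List V} {x : V × V},
    x ∈ l.zip l.tail → x.1 ∈ l.dropLast
  | [], x, h => by simp at h
  | [a], x, h => by simp at h
  | a :: b :: r, x, h => by
      simp only [List.tail_cons, List.zip_cons_cons, List.mem_cons] at h
      rcases h with rfl | h
      · simp
      · have := fst_mem_dropLast_of_mem_zip
          (show x ∈ (b :: r).zip (b :: r).tail from h)
        rw [List.dropLast_cons₂]
        exact List.mem_cons_of_mem _ this

lemma snd_mem_tail_of_mem_zip {l : List V} {x : V × V} (h : x ∈ l.zip l.tail) :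
    x.2 ∈ l.tail := by
  obtain ⟨a, b⟩ := x
  exact (List.of_mem_zip h).2

lemma split_first_mem {u : V} : ∀ {p : List V}, u ∈ p →
    ∃ q r, p = q ++ r ∧ q.getLast? = some u ∧ u ∉ q.dropLast ∧ q.head? = p.head?
  | [], h => absurd h (by simp)
  | a :: rest, h => by
      by_cases hau : a = u
      · exact ⟨[a], rest, by simp, by simp [hau], by simp, by simp⟩
      · have hu : u ∈ rest := by
          rcases List.mem_cons.1 h with h' | h'
          · exact absurd h'.symm hau
          · exact h'
        obtain ⟨q', r', hpr, hql, hud, hqh⟩ := split_first_mem hu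
        have hq' : q' ≠ [] := by rintro rfl; simp at hql
        refine ⟨a :: q', r', by rw [hpr]; rfl, ?_, ?_, by simp⟩
        · rw [show (a :: q').getLast? = q'.getLast? from ?_]
          · exact hql
          · cases q' with
            | nil => exact absurd rfl hq'
            | cons x xs => exact List.getLast?_cons_cons
        · intro hmem
          rw [List.dropLast_cons_of_ne_nil hq'] at hmem
          rcases List.mem_cons.1 hmem with h' | h'
          · exact hau h'.symm
          · exact hud h'

lemma split_last_mem {v : V} : ∀ {p : List V}, v ∈ p →
    ∃ q r, p = q ++ r ∧ r.head? = some v ∧ v ∉ r.tail ∧ r.getLast? = p.getLast?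
  | [], h => absurd h (by simp)
  | a :: rest, h => by
      by_cases hv : v ∈ rest
      · obtain ⟨q', r', hpr, hrh, hvt, hrl⟩ := split_last_mem hv
        have hr' : r' ≠ [] := by rintro rfl; simp at hrh
        refine ⟨a :: q', r', by rw [hpr]; rfl, hrh, hvt, ?_⟩
        rw [hrl]
        cases rest with
        | nil => simp at hv
        | cons x xs => exact List.getLast?_cons_cons.symm
      · have hav : a = v := by
          rcases List.mem_cons.1 h with h' | h'
          · exact h'.symm
          · exact absurd h' hv
        exact ⟨[], a :: rest, by simp, by simp [hav], by
          simpa using fun h' => hv h', rfl⟩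


lemma dist_le_pWeight {w : V → V → ℝ≥0∞} {s t : V} {p : List V} (h : IsPath w s t p) :
    dist w s t ≤ pWeight w p :=
  iInf₂_le p h

lemma list_sum_ne_top : ∀ {l : List ℝ≥0∞}, (∀ x ∈ l, x ≠ ⊤) → l.sum ≠ ⊤
  | [], _ => by simp
  | a :: l, h => by
      rw [List.sum_cons]
      exact ENNReal.add_ne_top.2
        ⟨h a List.mem_cons_self, list_sum_ne_top fun x hx => h x (List.mem_cons_of_mem _ hx)⟩

lemma pWeight_ne_top_s19 {w : V → V → ℝ≥0∞} {s t : V} {p : List V} (h : IsPath w s t p) :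
    pWeight w p ≠ ⊤ := by
  have hc := chain'_iff_zip.1 h.2.2.2
  refine list_sum_ne_top ?_
  intro x hx
  obtain ⟨e, he, rfl⟩ := List.mem_map.1 hx
  exact hc e he

lemma pWeight_congr {w w' : V → V → ℝ≥0∞} {p : List V}
    (h : ∀ x ∈ p.zip p.tail, w' x.1 x.2 = w x.1 x.2) : pWeight w' p = pWeight w p := by
  unfold pWeight
  congr 1
  exact List.map_congr_left fun x hx => h x hx

lemma isPath_congr {w w' : V → V → ℝ≥0∞} {s t : V} {p : List V}
    (h : ∀ x ∈ p.zip p.tail, w' x.1 x.2 = w x.1 x.2) : IsPath w' s t p ↔ IsPath w s t p := by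
  unfold IsPath
  rw [chain'_iff_zip, chain'_iff_zip]
  constructor
  · rintro ⟨h1, h2, h3, h4⟩
    exact ⟨h1, h2, h3, fun x hx => (h x hx) ▸ h4 x hx⟩
  · rintro ⟨h1, h2, h3, h4⟩
    exact ⟨h1, h2, h3, fun x hx => (h x hx).symm ▸ h4 x hx⟩

lemma same_of_not_edgeOn {w w' : V → V → ℝ≥0∞} {u v : V}
    (hsame : ∀ a b : V, (a, b) ≠ (u, v) → w' a b = w a b) {p : List V}
    (h : ¬ edgeOn p u v) : ∀ x ∈ p.zip p.tail, w' x.1 x.2 = w x.1 x.2 := by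
  intro x hx
  refine hsame x.1 x.2 fun h' => h ?_
  rw [edgeOn, ← h']
  simpa using hx

lemma isPath_append {w : V → V → ℝ≥0∞} {s u v t : V} {p₁ p₂ : List V}
    (h₁ : IsPath w s u p₁) (h₂ : IsPath w v t p₂) (hw : w u v ≠ ⊤) :
    IsPath w s t (p₁ ++ p₂) := by
  obtain ⟨hn1, hh1, hl1, hc1⟩ := h₁
  obtain ⟨hn2, hh2, hl2, hc2⟩ := h₂
  refine ⟨by simp [hn1], ?_, ?_, ?_⟩
  · rw [List.head?_append, hh1]; rfl
  · rw [List.getLast?_append, hl2]; rfl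
  · simp only [List.Chain']
    rw [List.isChain_append]
    refine ⟨hc1, hc2, ?_⟩
    intro x hx y hy
    rw [hl1] at hx
    rw [hh2] at hy
    simp only [Option.mem_def, Option.some.injEq] at hx hy
    rw [← hx, ← hy]
    exact hw

lemma isPath_split {w : V → V → ℝ≥0∞} {s t u v : V} {p₁ p₂ : List V}
    (h : IsPath w s t (p₁ ++ p₂)) (h₁ : p₁.getLast? = some u) (h₂ : p₂.head? = some v) :
    IsPath w s u p₁ ∧ IsPath w v t p₂ := by
  have hn1 : p₁ ≠ [] := by rintro rfl; simp at h₁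
  have hn2 : p₂ ≠ [] := by rintro rfl; simp at h₂
  obtain ⟨hn, hh, hl, hc⟩ := h
  simp only [List.Chain'] at hc
  rw [List.isChain_append] at hc
  rw [List.head?_append] at hh
  rw [List.getLast?_append] at hl
  cases hp1 : p₁.head? with
  | none => exact absurd (List.head?_eq_none_iff.1 hp1) hn1
  | some a =>
    cases hp2 : p₂.getLast? with
    | none => exact absurd (List.getLast?_eq_none_iff.1 hp2) hn2
    | some b =>
      rw [hp1] at hh
      rw [hp2] at hl
      simp only [Option.some_or, Option.some.injEq] at hh hl
      exact ⟨⟨hn1, by rw [hp1, hh], h₁, hc.1⟩, ⟨hn2, h₂, by rw [hp2, hl], hc.2.1⟩⟩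

lemma split_first_edge {u v : V} : ∀ {p : List V}, edgeOn p u v →
    ∃ p₁ p₂, p = p₁ ++ p₂ ∧ p₁.getLast? = some u ∧ p₂.head? = some v ∧ ¬ edgeOn p₁ u v
  | [], h => absurd h (by simp [edgeOn])
  | [a], h => absurd h (by simp [edgeOn])
  | a :: b :: r, h => by
      by_cases hab : ((u, v) : V × V) = (a, b)
      · obtain ⟨rfl, rfl⟩ := Prod.mk.injEq .. ▸ hab
        exact ⟨[u], v :: r, rfl, by simp, by simp, by simp [edgeOn]⟩
      · have h' : edgeOn (b :: r) u v := by
          have hh := h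
          rw [edgeOn] at hh
          rw [List.tail_cons, List.zip_cons_cons] at hh
          rcases List.mem_cons.1 hh with h'' | h''
          · exact absurd h'' hab
          · exact h''
        obtain ⟨q₁, q₂, hpr, hql, hqh, hnq⟩ := split_first_edge h'
        have hq₁ : q₁ ≠ [] := by rintro rfl; simp at hql
        refine ⟨a :: q₁, q₂, by rw [show a :: b :: r = a :: (b :: r) from rfl, hpr]; rfl, ?_, hqh, ?_⟩
        · cases q₁ with
          | nil => exact absurd rfl hq₁
          | cons x xs => rw [List.getLast?_cons_cons]; exact hql
        · intro hco
          rw [edgeOn] at hco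
          cases q₁ with
          | nil => exact absurd rfl hq₁
          | cons x xs =>
            have hxb : x = b := by
              have := congrArg List.head? hpr
              simpa using this.symm
            rw [List.tail_cons, List.zip_cons_cons] at hco
            rcases List.mem_cons.1 hco with h'' | h''
            · exact hab (by rw [h'', hxb])
            · exact hnq h''

lemma split_any_edge {u v : V} {p : List V} (h : edgeOn p u v) :
    ∃ p₁ p₂, p = p₁ ++ p₂ ∧ p₁.getLast? = some u ∧ p₂.head? = some v :=
  let ⟨p₁, p₂, h1, h2, h3, _⟩ := split_first_edge h
  ⟨p₁, p₂, h1, h2, h3⟩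

lemma pWeight_le_append_right {w : V → V → ℝ≥0∞} {q r : List V} {u : V}
    (hql : q.getLast? = some u) : pWeight w q ≤ pWeight w (q ++ r) := by
  cases r with
  | nil => simp
  | cons c r' =>
    rw [pWeight_append_s19 hql (show (c :: r').head? = some c from rfl)]
    exact le_add_right (le_add_right le_rfl)

lemma pWeight_le_append_left {w : V → V → ℝ≥0∞} {q r : List V} {v : V}
    (hrh : r.head? = some v) : pWeight w r ≤ pWeight w (q ++ r) := by
  cases hq : q with
  | nil => simp
  | cons c q' =>
    obtain ⟨x, hx⟩ := Option.isSome_iff_exists.1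
      (List.getLast?_isSome.2 (by simp : (c :: q' : List V) ≠ []))
    rw [pWeight_append_s19 hx hrh]
    exact le_add_self

lemma path_lb_u {w w' : V → V → ℝ≥0∞} {u v : V}
    (hsame : ∀ a b : V, (a, b) ≠ (u, v) → w' a b = w a b) {s : V} {p : List V}
    (h : IsPath w' s u p) : dist w s u ≤ pWeight w' p := by
  have hu : u ∈ p := List.mem_of_mem_getLast? (by rw [h.2.2.1]; rfl)
  obtain ⟨q, r, rfl, hql, hud, hqh⟩ := split_first_mem hu
  have hnq : ¬ edgeOn q u v := fun he => hud (fst_mem_dropLast_of_mem_zip he)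
  have hsq := same_of_not_edgeOn hsame hnq
  have hpq : IsPath w' s u q := by
    cases hr : r with
    | nil =>
      subst hr
      exact ⟨by rintro rfl; simp at hql, by rw [hqh]; exact h.2.1, hql, by
        have := h.2.2.2; simpa using this⟩
    | cons c r' =>
      subst hr
      exact (isPath_split h hql (show (c :: r').head? = some c from rfl)).1
  calc dist w s u ≤ pWeight w q := dist_le_pWeight ((isPath_congr hsq).1 hpq)
    _ = pWeight w' q := (pWeight_congr hsq).symm
    _ ≤ pWeight w' (q ++ r) := pWeight_le_append_right hql

lemma path_lb_v {w w' : V → V → ℝ≥0∞} {u v : V}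
    (hsame : ∀ a b : V, (a, b) ≠ (u, v) → w' a b = w a b) {t : V} {p : List V}
    (h : IsPath w' v t p) : dist w v t ≤ pWeight w' p := by
  have hv : v ∈ p := List.mem_of_mem_head? (by rw [h.2.1]; rfl)
  obtain ⟨q, r, rfl, hrh, hvt, hrl⟩ := split_last_mem hv
  have hnr : ¬ edgeOn r u v := fun he => hvt (snd_mem_tail_of_mem_zip he)
  have hsr := same_of_not_edgeOn hsame hnr
  have hpr : IsPath w' v t r := by
    cases hq : q with
    | nil =>
      subst hq
      exact ⟨by rintro rfl; simp at hrh, hrh, by rw [hrl]; exact h.2.2.1, by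
        have := h.2.2.2; simpa using this⟩
    | cons c q' =>
      subst hq
      obtain ⟨x, hx⟩ := Option.isSome_iff_exists.1
        (List.getLast?_isSome.2 (by simp : (c :: q' : List V) ≠ []))
      exact (isPath_split h hx hrh).2
  calc dist w v t ≤ pWeight w r := dist_le_pWeight ((isPath_congr hsr).1 hpr)
    _ = pWeight w' r := (pWeight_congr hsr).symm
    _ ≤ pWeight w' (q ++ r) := pWeight_le_append_left hrh

lemma not_edgeOn_of_shortest_to_u {w : V → V → ℝ≥0∞} (hpos : ∀ a b, 0 < w a b)
    {s u v : V} {p : List V} (hfin : dist w s u ≠ ⊤) (h : IsShortest w s u p) :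
    ¬ edgeOn p u v := by
  intro he
  obtain ⟨p₁, p₂, hp, h1, h2⟩ := split_any_edge he
  rw [hp] at h
  have hsp := isPath_split h.1 h1 h2
  have hb : dist w s u ≤ pWeight w p₁ := dist_le_pWeight hsp.1
  have hlt : dist w s u < pWeight w (p₁ ++ p₂) := by
    rw [pWeight_append_s19 h1 h2]
    calc dist w s u < dist w s u + w u v := ENNReal.lt_add_right hfin (hpos u v).ne'
      _ ≤ pWeight w p₁ + w u v := add_le_add_left hb _
      _ ≤ pWeight w p₁ + w u v + pWeight w p₂ := le_add_right le_rfl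
  exact hlt.ne' h.2

lemma not_edgeOn_of_shortest_from_v {w : V → V → ℝ≥0∞} (hpos : ∀ a b, 0 < w a b)
    {v t u : V} {p : List V} (hfin : dist w v t ≠ ⊤) (h : IsShortest w v t p) :
    ¬ edgeOn p u v := by
  intro he
  obtain ⟨p₁, p₂, hp, h1, h2⟩ := split_any_edge he
  rw [hp] at h
  have hsp := isPath_split h.1 h1 h2
  have hb : dist w v t ≤ pWeight w p₂ := dist_le_pWeight hsp.2
  have hlt : dist w v t < pWeight w (p₁ ++ p₂) := by
    rw [pWeight_append_s19 h1 h2]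
    calc dist w v t < w u v + dist w v t := by
          rw [add_comm]; exact ENNReal.lt_add_right hfin (hpos u v).ne'
      _ ≤ w u v + pWeight w p₂ := add_le_add_right hb _
      _ ≤ pWeight w p₁ + w u v + pWeight w p₂ := by rw [add_assoc]; exact le_add_self
  exact hlt.ne' h.2

lemma key_lower {w w' : V → V → ℝ≥0∞} {u v s t : V}
    (hsame : ∀ a b : V, (a, b) ≠ (u, v) → w' a b = w a b) {p : List V}
    (hp : IsPath w' s t p) (he : edgeOn p u v) :
    dist w s u + w' u v + dist w v t ≤ pWeight w' p := by
  obtain ⟨p₁, p₂, hps, h1, h2, hn1⟩ := split_first_edge he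
  rw [hps] at hp ⊢
  have hsp := isPath_split hp h1 h2
  have hb1 : dist w s u ≤ pWeight w' p₁ := by
    rw [pWeight_congr (same_of_not_edgeOn hsame hn1)]
    exact dist_le_pWeight ((isPath_congr (same_of_not_edgeOn hsame hn1)).1 hsp.1)
  have hb2 : dist w v t ≤ pWeight w' p₂ := path_lb_v hsame hsp.2
  rw [pWeight_append_s19 h1 h2]
  exact add_le_add (add_le_add hb1 le_rfl) hb2

lemma unique_middle {α : Type*} {a : α} : ∀ {l₁ m₁ : List α} {l₂ m₂ : List α},
    l₁ ++ a :: l₂ = m₁ ++ a :: m₂ → a ∉ l₁ → a ∉ m₁ → l₁ = m₁ ∧ l₂ = m₂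
  | [], [], _, _, h, _, _ => ⟨rfl, by simpa using h⟩
  | [], b :: m₁', l₂, m₂, h, h1, h2 => by
      simp only [List.nil_append, List.cons_append, List.cons.injEq] at h
      exact absurd (h.1 ▸ List.mem_cons_self) h2
  | b :: l₁', [], l₂, m₂, h, h1, h2 => by
      simp only [List.nil_append, List.cons_append, List.cons.injEq] at h
      exact absurd (h.1.symm ▸ List.mem_cons_self) h1
  | b :: l₁', c :: m₁', l₂, m₂, h, h1, h2 => by
      simp only [List.cons_append, List.cons.injEq] at h
      obtain ⟨rfl, h'⟩ := h
      have := unique_middle h' (fun hm => h1 (List.mem_cons_of_mem _ hm))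
        (fun hm => h2 (List.mem_cons_of_mem _ hm))
      exact ⟨by rw [this.1], this.2⟩

lemma length_zip_tail {l : List V} (h : l ≠ []) :
    l.length = (l.zip l.tail).length + 1 := by
  rw [List.length_zip, List.length_tail]
  have : 1 ≤ l.length := List.length_pos_iff.2 h
  omega

lemma append_split_unique {u v : V} {p₁ p₂ q₁ q₂ : List V}
    (h : p₁ ++ p₂ = q₁ ++ q₂)
    (hp1 : p₁.getLast? = some u) (hq1 : q₁.getLast? = some u)
    (hp2 : p₂.head? = some v) (hq2 : q₂.head? = some v)
    (np1 : ¬edgeOn p₁ u v) (np2 : ¬edgeOn p₂ u v)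
    (nq1 : ¬edgeOn q₁ u v) (nq2 : ¬edgeOn q₂ u v) : p₁ = q₁ ∧ p₂ = q₂ := by
  have hE : p₁.zip p₁.tail ++ (u, v) :: p₂.zip p₂.tail
      = q₁.zip q₁.tail ++ (u, v) :: q₂.zip q₂.tail := by
    rw [← zip_tail_append hp1 hp2, ← zip_tail_append hq1 hq2, h]
  have hu := unique_middle hE np1 nq1
  have hn1 : p₁ ≠ [] := by rintro rfl; simp at hp1
  have hn1' : q₁ ≠ [] := by rintro rfl; simp at hq1
  have hlen : p₁.length = q₁.length := by
    rw [length_zip_tail hn1, length_zip_tail hn1', hu.1]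
  exact List.append_inj h hlen

lemma ennreal_cancel {a b c a' b' : ℝ≥0∞} (ha : a' ≤ a) (hb : b' ≤ b)
    (h : a + c + b = a' + c + b') (hfin : a' + c + b' ≠ ⊤) : a = a' ∧ b = b' := by
  have hbne : b' ≠ ⊤ := fun h' => hfin (by simp [h'])
  have hcne : c ≠ ⊤ := by
    intro h'
    exact hfin (by rw [h']; simp)
  have hac : a' + c ≠ ⊤ := by
    intro h'
    exact hfin (by rw [ENNReal.add_eq_top]; exact Or.inl h')
  have e1 : a' + c + b = a' + c + b' :=
    le_antisymm
      (by
        calc a' + c + b ≤ a + c + b := add_le_add (add_le_add ha le_rfl) le_rfl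
          _ = a' + c + b' := h)
      (add_le_add le_rfl hb)
  have hbeq : b = b' := WithTop.add_left_cancel hac e1
  have e2 : a + c + b' = a' + c + b' := hbeq ▸ h
  have e3 : a + c = a' + c := WithTop.add_right_cancel hbne e2
  exact ⟨WithTop.add_right_cancel hcne e3, hbeq⟩

lemma ncard_prod {α β : Type*} (A : Set α) (B : Set β) :
    (A ×ˢ B).ncard = A.ncard * B.ncard := by
  rw [← Nat.card_coe_set_eq, ← Nat.card_coe_set_eq, ← Nat.card_coe_set_eq,
    Nat.card_congr (Equiv.Set.prod A B), Nat.card_prod]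


/-- after an incremental edge update on `(u,v)` with new weight
`w'(u,v)`, for every pair `s, t`, the number of shortest paths from `s` to `t` in
`G'` containing the edge `(u,v)` equals `σ_{su} · σ_{vt}` if
`d'(s,t) = d(s,u) + w'(u,v) + d(v,t)`, and equals `0` if
`d'(s,t) < d(s,u) + w'(u,v) + d(v,t)`. -/
theorem count_new_paths_through_uv [Fintype V] (w w' : V → V → ℝ≥0∞) (u v : V)
    (hpos : ∀ a b, 0 < w a b) (hpos' : ∀ a b, 0 < w' a b)
    (hdec : w' u v < w u v)
    (hsame : ∀ a b : V, (a, b) ≠ (u, v) → w' a b = w a b) (s t : V) :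
    (dist w' s t = dist w s u + w' u v + dist w v t →
      Set.ncard {p | IsShortest w' s t p ∧ edgeOn p u v} =
        nsp w s u * nsp w v t) ∧
    (dist w' s t < dist w s u + w' u v + dist w v t →
      Set.ncard {p | IsShortest w' s t p ∧ edgeOn p u v} = 0) := by
  have hxne : w' u v ≠ ⊤ := hdec.ne_top
  have empty_of_top : ∀ (W : V → V → ℝ≥0∞) (a b : V), dist W a b = ⊤ →
      {p : List V | IsShortest W a b p} = ∅ := by
    intro W a b hd
    ext p
    simp only [Set.mem_setOf_eq, Set.mem_empty_iff_false, iff_false]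
    rintro ⟨hp, hw⟩
    exact pWeight_ne_top_s19 hp (by rw [hw, hd])
  constructor
  · intro heq
    by_cases htop : dist w s u + w' u v + dist w v t = ⊤
    · have hS : {p : List V | IsShortest w' s t p ∧ edgeOn p u v} = ∅ := by
        ext p
        simp only [Set.mem_setOf_eq, Set.mem_empty_iff_false, iff_false, not_and]
        intro hsp _
        exact pWeight_ne_top_s19 hsp.1 (by rw [hsp.2, heq, htop]) |>.elim
      rw [hS, Set.ncard_empty]
      rcases ENNReal.add_eq_top.1 htop with h | h
      · rcases ENNReal.add_eq_top.1 h with h' | h'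
        · have : nsp w s u = 0 := by rw [nsp, empty_of_top w s u h', Set.ncard_empty]
          rw [this, zero_mul]
        · exact absurd h' hxne
      · have : nsp w v t = 0 := by rw [nsp, empty_of_top w v t h, Set.ncard_empty]
        rw [this, mul_zero]
    · have hd1 : dist w s u ≠ ⊤ := fun h' => htop (by rw [h']; simp)
      have hd2 : dist w v t ≠ ⊤ := fun h' => htop (by rw [h']; simp)
      have hSeq : {p : List V | IsShortest w' s t p ∧ edgeOn p u v} =
          (fun x : List V × List V => x.1 ++ x.2) ''
            ({p : List V | IsShortest w s u p} ×ˢ {p : List V | IsShortest w v t p}) := by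
        ext p
        simp only [Set.mem_setOf_eq, Set.mem_image, Set.mem_prod]
        constructor
        · rintro ⟨hsp, he⟩
          obtain ⟨p₁, p₂, hps, h1, h2, hn1⟩ := split_first_edge he
          subst hps
          have hsplit := isPath_split hsp.1 h1 h2
          have hsq1 := same_of_not_edgeOn hsame hn1
          have hq1w : IsPath w s u p₁ := (isPath_congr hsq1).1 hsplit.1
          have hb1 : dist w s u ≤ pWeight w' p₁ := by
            rw [pWeight_congr hsq1]
            exact dist_le_pWeight hq1w
          have hb2 : dist w v t ≤ pWeight w' p₂ := path_lb_v hsame hsplit.2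
          have hsum : pWeight w' p₁ + w' u v + pWeight w' p₂
              = dist w s u + w' u v + dist w v t := by
            rw [← pWeight_append_s19 h1 h2, hsp.2, heq]
          obtain ⟨e1, e2⟩ := ennreal_cancel hb1 hb2 hsum htop
          have hn2 : ¬ edgeOn p₂ u v := by
            intro he2
            obtain ⟨c, d, hcd, hc1, hc2⟩ := split_any_edge he2
            rw [hcd] at hsplit
            have hd' := (isPath_split hsplit.2 hc1 hc2).2
            have hbd : dist w v t ≤ pWeight w' d := path_lb_v hsame hd'
            have hpw : pWeight w' p₂ = pWeight w' c + w' u v + pWeight w' d := by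
              rw [hcd, pWeight_append_s19 hc1 hc2]
            have hlt : dist w v t < pWeight w' p₂ := by
              rw [hpw]
              calc dist w v t < w' u v + dist w v t := by
                    rw [add_comm]; exact ENNReal.lt_add_right hd2 (hpos' u v).ne'
                _ ≤ w' u v + pWeight w' d := add_le_add_right hbd _
                _ ≤ pWeight w' c + w' u v + pWeight w' d := by
                    rw [add_assoc]; exact le_add_self
            exact hlt.ne' e2
          have hsq2 := same_of_not_edgeOn hsame hn2
          refine ⟨(p₁, p₂), ⟨⟨hq1w, by rw [← pWeight_congr hsq1]; exact e1⟩,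
            ⟨(isPath_congr hsq2).1 hsplit.2, by rw [← pWeight_congr hsq2]; exact e2⟩⟩, rfl⟩
        · rintro ⟨⟨p₁, p₂⟩, ⟨hA, hB⟩, rfl⟩
          have hn1 : ¬ edgeOn p₁ u v := not_edgeOn_of_shortest_to_u hpos hd1 hA
          have hn2 : ¬ edgeOn p₂ u v := not_edgeOn_of_shortest_from_v hpos hd2 hB
          have hsq1 := same_of_not_edgeOn hsame hn1
          have hsq2 := same_of_not_edgeOn hsame hn2
          have h1 : p₁.getLast? = some u := hA.1.2.2.1
          have h2 : p₂.head? = some v := hB.1.2.1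
          have hpath : IsPath w' s t (p₁ ++ p₂) :=
            isPath_append ((isPath_congr hsq1).2 hA.1) ((isPath_congr hsq2).2 hB.1) hxne
          refine ⟨⟨hpath, ?_⟩, ?_⟩
          · rw [pWeight_append_s19 h1 h2, pWeight_congr hsq1, pWeight_congr hsq2, hA.2, hB.2, heq]
          · rw [edgeOn, zip_tail_append h1 h2]
            simp
      rw [hSeq]
      have hinj : Set.InjOn (fun x : List V × List V => x.1 ++ x.2)
          ({p : List V | IsShortest w s u p} ×ˢ {p : List V | IsShortest w v t p}) := by
        rintro ⟨p₁, p₂⟩ ⟨hA, hB⟩ ⟨q₁, q₂⟩ ⟨hA', hB'⟩ hfe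
        simp only at hfe
        have := append_split_unique hfe hA.1.2.2.1 hA'.1.2.2.1 hB.1.2.1 hB'.1.2.1
          (not_edgeOn_of_shortest_to_u hpos hd1 hA) (not_edgeOn_of_shortest_from_v hpos hd2 hB)
          (not_edgeOn_of_shortest_to_u hpos hd1 hA') (not_edgeOn_of_shortest_from_v hpos hd2 hB')
        exact Prod.ext this.1 this.2
      rw [Set.ncard_image_of_injOn hinj, ncard_prod]
      rfl
  · intro hlt
    have hS : {p : List V | IsShortest w' s t p ∧ edgeOn p u v} = ∅ := by
      ext p
      simp only [Set.mem_setOf_eq, Set.mem_empty_iff_false, iff_false, not_and]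
      intro hsp he
      have hkl := key_lower hsame hsp.1 he
      rw [hsp.2] at hkl
      exact absurd hlt (not_lt.2 hkl)
    rw [hS, Set.ncard_empty]

end BC
end
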